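/- Let ω be a radial weight on the unit disc with all moments positive, and define ω̃(u) = 2 ∫_{|u|}^1 ω(r) r dr. Then the Bergman reproducing kernels satisfy (∂/∂u) B_ζ^ω(u) = conj(ζ) · B_ζ^{ω̃}(u) for all u, ζ ∈ D. -/

import Mathlib

open Metric Set MeasureTheory intervalIntegral

/-- The moment `ω_x = ∫_0^1 r^x ω(r) dr` of a radial weight. -/
noncomputable def moment (ω : ℝ → ℝ) (x : ℝ) : ℝ := ∫ r in (0 : ℝ)..1, r ^ x * ω r

/-- The Bergman reproducing kernel of `A²_ω`, as a power series in `u conj(ζ)`. -/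
noncomputable def bergmanKernel (ω : ℝ → ℝ) (ζ u : ℂ) : ℂ :=
  ∑' n : ℕ, (u * (starRingEnd ℂ) ζ) ^ n / (2 * (moment ω (2 * n + 1) : ℂ))

/-- The associated weight `ω̃(r) = 2 ∫_r^1 ω(s) s ds`. -/
noncomputable def tildeWeight (ω : ℝ → ℝ) (r : ℝ) : ℝ := 2 * ∫ s in r..1, ω s * s

lemma moment_nat (ω : ℝ → ℝ) (k : ℕ) :
    moment ω (k : ℝ) = ∫ r in Ioc (0:ℝ) 1, r ^ k * ω r := by
  rw [moment, intervalIntegral.integral_of_le zero_le_one]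
  simp [Real.rpow_natCast]

lemma moment_tilde (ω : ℝ → ℝ) (hmeas : Measurable ω)
    (hint : IntegrableOn ω (Set.Ioo (0 : ℝ) 1)) (m : ℕ) :
    moment (tildeWeight ω) (2 * m + 1) = moment ω (2 * m + 3) / (m + 1) := by
  have hc1 : (2 * (m:ℝ) + 1) = ((2*m+1 : ℕ) : ℝ) := by push_cast; ring
  have hc3 : (2 * (m:ℝ) + 3) = ((2*m+3 : ℕ) : ℝ) := by push_cast; ring
  rw [hc1, hc3, moment_nat, moment_nat]
  set μ := volume.restrict (Ioc (0:ℝ) 1) with hμ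
  set G : ℝ → ℝ → ℝ := fun r s => (Ioi r).indicator (fun t => r^(2*m+1)*(2*(ω t * t))) s with hG
  have hintIoc : IntegrableOn ω (Ioc (0:ℝ) 1) := by
    refine hint.congr_set_ae ?_
    exact Ioo_ae_eq_Ioc.symm
  -- Step A : rewrite integrand
  have hA : ∫ r in Ioc (0:ℝ) 1, r ^ (2*m+1) * tildeWeight ω r
      = ∫ r in Ioc (0:ℝ) 1, ∫ s in Ioc (0:ℝ) 1, G r s := by
    refine setIntegral_congr_fun measurableSet_Ioc (fun r hr => ?_)
    rw [hG]
    rw [setIntegral_indicator measurableSet_Ioi]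
    have hset : Ioc (0:ℝ) 1 ∩ Ioi r = Ioc r 1 := by
      ext x
      simp only [mem_inter_iff, mem_Ioc, mem_Ioi]
      constructor
      · rintro ⟨⟨_, h2⟩, h3⟩; exact ⟨h3, h2⟩
      · rintro ⟨h1, h2⟩; exact ⟨⟨hr.1.trans h1, h2⟩, h1⟩
    rw [hset, MeasureTheory.integral_const_mul, MeasureTheory.integral_const_mul,
      tildeWeight, intervalIntegral.integral_of_le hr.2]
  rw [hA]
  -- Step B : Fubini
  have hGmeas : Measurable (Function.uncurry G) := by
    have : Function.uncurry G = fun p : ℝ×ℝ =>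
        if p.1 < p.2 then p.1^(2*m+1)*(2*(ω p.2 * p.2)) else 0 := by
      ext p; simp [Function.uncurry, hG, indicator_apply]
    rw [this]
    refine Measurable.ite (measurableSet_lt measurable_fst measurable_snd) ?_ measurable_const
    exact ((measurable_fst.pow_const _).mul
      (measurable_const.mul ((hmeas.comp measurable_snd).mul measurable_snd)))
  have hdom : Integrable (fun p : ℝ×ℝ => (1:ℝ) * (2 * |ω p.2|)) (μ.prod μ) := by
    exact (integrable_const (μ := μ) (1:ℝ)).mul_prod ((hintIoc.abs).const_mul 2)
  have hGint : Integrable (Function.uncurry G) (μ.prod μ) := by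
    refine hdom.mono hGmeas.aestronglyMeasurable ?_
    rw [hμ, Measure.prod_restrict]
    filter_upwards [ae_restrict_mem (measurableSet_Ioc.prod measurableSet_Ioc)] with p hp
    obtain ⟨hp1, hp2⟩ := hp
    simp only [Function.uncurry, hG, indicator_apply, mem_Ioi]
    have habs1 : |p.1| ≤ 1 := abs_le.2 ⟨by linarith [hp1.1], hp1.2⟩
    have habs2 : |p.2| ≤ 1 := abs_le.2 ⟨by linarith [hp2.1], hp2.2⟩
    have hrhs : ‖(1:ℝ) * (2 * |ω p.2|)‖ = 2 * |ω p.2| := by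
      rw [one_mul, Real.norm_eq_abs, abs_of_nonneg (by positivity)]
    rw [hrhs]
    split_ifs with h
    · rw [Real.norm_eq_abs, abs_mul, abs_mul, abs_mul, abs_pow, abs_two]
      have h1 : |p.1| ^ (2*m+1) ≤ 1 := pow_le_one₀ (abs_nonneg _) habs1
      have hb : |p.1| ^ (2*m+1) * (2*(|ω p.2| * |p.2|)) ≤ 1 * (2*(|ω p.2| * 1)) := by
        gcongr
      linarith
    · simp [abs_nonneg]
  rw [MeasureTheory.integral_integral_swap hGint]
  -- Step C : compute inner integral
  have hC : ∀ s ∈ Ioc (0:ℝ) 1,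
      (∫ r in Ioc (0:ℝ) 1, G r s) = s ^ (2*m+3) * ω s * ((m:ℝ)+1)⁻¹ := by
    intro s hs
    have h1 : (∫ r in Ioc (0:ℝ) 1, G r s)
        = ∫ r in Ioc (0:ℝ) 1, (Iio s).indicator (fun r => r^(2*m+1)*(2*(ω s * s))) r := by
      refine setIntegral_congr_fun measurableSet_Ioc (fun r _ => ?_)
      simp [hG, indicator_apply]
    rw [h1, setIntegral_indicator measurableSet_Iio]
    have hset : Ioc (0:ℝ) 1 ∩ Iio s = Ioo 0 s := by
      ext x
      simp only [mem_inter_iff, mem_Ioc, mem_Iio, mem_Ioo]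
      constructor
      · rintro ⟨⟨h1, _⟩, h3⟩; exact ⟨h1, h3⟩
      · rintro ⟨h1, h2⟩; exact ⟨⟨h1, h2.le.trans hs.2⟩, h2⟩
    rw [hset, MeasureTheory.integral_mul_const]
    have hpow : (∫ r in Ioo (0:ℝ) s, r ^ (2*m+1)) = s ^ (2*m+2) / (2*(m:ℝ)+2) := by
      rw [← integral_Ioc_eq_integral_Ioo, ← intervalIntegral.integral_of_le hs.1.le,
        integral_pow]
      push_cast
      ring_nf
    rw [hpow]
    have hne : (2*(m:ℝ)+2) ≠ 0 := by positivity
    have hne2 : ((m:ℝ)+1) ≠ 0 := by positivity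
    field_simp
    ring
  rw [setIntegral_congr_fun measurableSet_Ioc hC]
  rw [div_eq_mul_inv, ← MeasureTheory.integral_mul_const]

theorem stmt8 (ω : ℝ → ℝ)
    (hmeas : Measurable ω)
    (hpos : ∀ r ∈ Set.Ioo (0 : ℝ) 1, 0 ≤ ω r)
    (hint : IntegrableOn ω (Set.Ioo (0 : ℝ) 1))
    (hmom : ∀ x : ℝ, 1 ≤ x → 0 < moment ω x)
    (hSum : ∀ ζ ∈ ball (0 : ℂ) 1, ∀ u ∈ ball (0 : ℂ) 1,
      Summable (fun n : ℕ =>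
        (u * (starRingEnd ℂ) ζ) ^ n / (2 * (moment ω (2 * n + 1) : ℂ))))
    (hSumT : ∀ ζ ∈ ball (0 : ℂ) 1, ∀ u ∈ ball (0 : ℂ) 1,
      Summable (fun n : ℕ =>
        (u * (starRingEnd ℂ) ζ) ^ n / (2 * (moment (tildeWeight ω) (2 * n + 1) : ℂ)))) :
    ∀ ζ ∈ ball (0 : ℂ) 1, ∀ u ∈ ball (0 : ℂ) 1,
      deriv (fun w => bergmanKernel ω ζ w) u =
        (starRingEnd ℂ) ζ * bergmanKernel (tildeWeight ω) ζ u := by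
  intro ζ hζ u hu
  set c : ℕ → ℂ := fun n => ((starRingEnd ℂ) ζ) ^ n / (2 * (moment ω (2 * n + 1) : ℂ))
    with hc
  have hker : ∀ w : ℂ, bergmanKernel ω ζ w = ∑' n : ℕ, c n * w ^ n := by
    intro w
    unfold bergmanKernel
    refine tsum_congr fun n => ?_
    rw [hc, mul_pow]
    ring
  have hunorm : ‖u‖ < 1 := by rwa [mem_ball, dist_zero_right] at hu
  set R : ℝ := (‖u‖ + 1) / 2 with hR
  set r' : ℝ := (R + 1) / 2 with hr'
  have hR0 : 0 < R := by positivity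
  have huR : ‖u‖ < R := by rw [hR]; linarith
  have hRr' : R < r' := by rw [hr']; linarith [hunorm]
  have hr'1 : r' < 1 := by rw [hr']; linarith [hunorm]
  have hr'0 : 0 < r' := lt_trans hR0 hRr'
  set q : ℝ := R / r' with hq
  have hq0 : 0 < q := div_pos hR0 hr'0
  have hq1 : q < 1 := (div_lt_one hr'0).2 hRr'
  clear_value R r' q
  -- boundedness of the coefficients at radius r'
  have hs' : Summable (fun n : ℕ => c n * (r' : ℂ) ^ n) := by
    have hmem : (r' : ℂ) ∈ ball (0 : ℂ) 1 := by
      rw [mem_ball, dist_zero_right, Complex.norm_real, Real.norm_eq_abs,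
        abs_of_pos hr'0]
      exact hr'1
    refine (hSum ζ hζ (r' : ℂ) hmem).congr fun n => ?_
    rw [hc, mul_pow]
    ring
  obtain ⟨C, hC⟩ : ∃ C : ℝ, ∀ n : ℕ, ‖c n * (r' : ℂ) ^ n‖ ≤ C := by
    have ht : Filter.Tendsto (fun n : ℕ => ‖c n * (r' : ℂ) ^ n‖) Filter.atTop (nhds 0) := by
      simpa using hs'.tendsto_atTop_zero.norm
    obtain ⟨C, hC⟩ := ht.bddAbove_range
    exact ⟨C, fun n => hC (mem_range_self n)⟩
  have hCnorm : ∀ n : ℕ, ‖c n‖ * r' ^ n ≤ C := by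
    intro n
    have := hC n
    rwa [norm_mul, norm_pow, Complex.norm_real, Real.norm_eq_abs, abs_of_pos hr'0] at this
  -- summable bound for the derivatives
  set bd : ℕ → ℝ := fun n => C / r' * (n * q ^ (n - 1)) with hbd
  have hbd_sum : Summable bd := by
    have h1 : Summable (fun n : ℕ => (n : ℝ) * q ^ n) := by
      have := summable_pow_mul_geometric_of_norm_lt_one 1 (r := q)
        (by rw [Real.norm_eq_abs, abs_of_pos hq0]; exact hq1)
      simpa using this
    have h2 : Summable (fun n : ℕ => ((n : ℝ) * q ^ n) / q) := h1.div_const q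
    have h3 : Summable (fun n : ℕ => (n : ℝ) * q ^ (n - 1)) := by
      refine h2.congr fun n => ?_
      cases n with
      | zero => simp
      | succ k =>
        simp only [Nat.succ_sub_one, pow_succ]
        field_simp
    exact h3.mul_left _
  have hgbound : ∀ (n : ℕ) (y : ℂ), y ∈ ball (0 : ℂ) R →
      ‖c n * ((n : ℂ) * y ^ (n - 1))‖ ≤ bd n := by
    intro n y hy
    have hynorm : ‖y‖ ≤ R := by
      rw [mem_ball, dist_zero_right] at hy; exact hy.le
    rw [norm_mul, norm_mul, norm_pow, Complex.norm_natCast]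
    have h1 : ‖y‖ ^ (n - 1) ≤ R ^ (n - 1) :=
      pow_le_pow_left₀ (norm_nonneg _) hynorm _
    have h2 : ‖c n‖ * ((n : ℝ) * ‖y‖ ^ (n-1)) ≤ ‖c n‖ * ((n:ℝ) * R ^ (n-1)) := by
      gcongr
    refine h2.trans ?_
    rw [hbd]
    -- ‖c n‖ * (n * R^(n-1)) ≤ C / r' * (n * q^(n-1))
    have hRq : R ^ (n-1) = q ^ (n-1) * r' ^ (n-1) := by
      have hr'n : (r':ℝ) ^ (n-1) ≠ 0 := by positivity
      rw [hq, div_pow, div_mul_cancel₀ _ hr'n]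
    rw [hRq]
    have key : ‖c n‖ * r' ^ (n-1) ≤ C / r' := by
      rcases Nat.eq_zero_or_pos n with hn | hn
      · subst hn
        have h0 := hCnorm 0
        rw [pow_zero, mul_one] at h0
        have hC0 : (0:ℝ) ≤ C := le_trans (norm_nonneg _) h0
        simp only [Nat.zero_sub, pow_zero, mul_one]
        calc ‖c 0‖ ≤ C := h0
          _ ≤ C / r' := by
            rw [le_div_iff₀ hr'0]
            nlinarith
      · have heq : ‖c n‖ * r' ^ n = (‖c n‖ * r' ^ (n-1)) * r' := by
          rw [mul_assoc, ← pow_succ, Nat.sub_add_cancel hn]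
        have h := hCnorm n
        rw [heq] at h
        rw [le_div_iff₀ hr'0]
        exact h
    calc ‖c n‖ * ((n:ℝ) * (q ^ (n-1) * r' ^ (n-1)))
        = (‖c n‖ * r' ^ (n-1)) * ((n:ℝ) * q ^ (n-1)) := by ring
      _ ≤ C / r' * ((n:ℝ) * q ^ (n-1)) := by
          refine mul_le_mul_of_nonneg_right key (by positivity)
  -- termwise differentiation
  have humem : u ∈ ball (0 : ℂ) R := by rwa [mem_ball, dist_zero_right]
  have hg0 : Summable (fun n : ℕ => c n * u ^ n) := by
    refine (hSum ζ hζ u hu).congr fun n => ?_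
    rw [hc, mul_pow]
    ring
  have hderiv : HasDerivAt (fun w : ℂ => ∑' n : ℕ, c n * w ^ n)
      (∑' n : ℕ, c n * ((n : ℂ) * u ^ (n - 1))) u :=
    hasDerivAt_tsum_of_isPreconnected hbd_sum isOpen_ball
      (convex_ball _ _).isPreconnected
      (fun n y _ => (hasDerivAt_pow n y).const_mul (c n))
      (fun n y hy => hgbound n y hy) humem hg0 humem
  have hkerfun : (fun w => bergmanKernel ω ζ w) = fun w => ∑' n : ℕ, c n * w ^ n :=
    funext hker
  rw [hkerfun, hderiv.deriv]
  -- reindex the sum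
  have hsum' : Summable (fun n : ℕ => c n * ((n : ℂ) * u ^ (n - 1))) :=
    Summable.of_norm_bounded hbd_sum (fun n => hgbound n u humem)
  rw [Summable.tsum_eq_zero_add hsum']
  simp only [Nat.cast_zero, zero_mul, mul_zero, zero_add, Nat.cast_add, Nat.cast_one,
    Nat.add_sub_cancel]
  rw [bergmanKernel, ← tsum_mul_left]
  refine tsum_congr fun n => ?_
  have hmt := moment_tilde ω hmeas hint n
  have hM : 0 < moment ω (2 * (n:ℝ) + 3) :=
    hmom _ (by nlinarith [Nat.cast_nonneg (α := ℝ) n])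
  have hexp : (2 * ((n:ℝ) + 1) + 1) = 2 * (n:ℝ) + 3 := by ring
  have hcval : c (n+1) = ((starRingEnd ℂ) ζ) ^ (n+1) /
      (2 * ((moment ω (2 * (n:ℝ) + 3) : ℝ) : ℂ)) := by
    rw [hc]
    push_cast
    rw [hexp]
  rw [hcval, hmt]
  have hMne : ((moment ω (2 * (n:ℝ) + 3) : ℝ) : ℂ) ≠ 0 :=
    Complex.ofReal_ne_zero.2 (ne_of_gt hM)
  have hnne : ((n:ℂ) + 1) ≠ 0 := Nat.cast_add_one_ne_zero n
  have hcast : ((moment ω (2 * (n:ℝ) + 3) / ((n:ℝ) + 1) : ℝ) : ℂ)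
      = ((moment ω (2 * (n:ℝ) + 3) : ℝ) : ℂ) / ((n:ℂ) + 1) := by
    push_cast
    ring
  rw [hcast]
  rw [mul_pow, pow_succ]
  field_simp
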